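/- Let U be a K-vector subspace of Kⁿ. Then for every coset b ∈ Kⁿ/U, the set {v(w) : w ∈ b} ⊆ Γ has a minimum. -/

import Mathlib

noncomputable section

open scoped Classical Pointwise

section Preamble

variable {K : Type*} [Field K] {Γ : Type*} [LinearOrderedCommGroupWithZero Γ]

instance (priority := 100) : OrderBot Γ where
  bot := 0
  bot_le _ := zero_le'

/-- The max-valuation on `K^n`: `v(a) = maxᵢ v(aᵢ)`. -/
def vv (v : Valuation K Γ) {n : ℕ} (x : Fin n → K) : Γ :=
  Finset.univ.sup fun i => v (x i)

/-- `rvEq v x y` expresses `rv(x) = rv(y)` in `RV⁽ⁿ⁾ = Kⁿ/∼`, where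
`x ∼ y` iff `v(x−y) < v(x)` or `x = y = 0`. -/
def rvEq (v : Valuation K Γ) {n : ℕ} (x y : Fin n → K) : Prop :=
  vv v (x - y) < vv v x ∨ (x = 0 ∧ y = 0)

/-- Balls in `K` (with `K` itself counting as a ball). -/
def IsBall1 (v : Valuation K Γ) (B : Set K) : Prop :=
  B = Set.univ ∨ ∃ a : K, ∃ γ : Γ, γ ≠ 0 ∧
    (B = {x | v (x - a) < γ} ∨ B = {x | v (x - a) ≤ γ})

/-- Balls in `Kⁿ` (with `Kⁿ` itself counting as a ball). -/
def IsBall (v : Valuation K Γ) {n : ℕ} (B : Set (Fin n → K)) : Prop :=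
  B = Set.univ ∨ ∃ a : Fin n → K, ∃ γ : Γ, γ ≠ 0 ∧
    (B = {x | vv v (x - a) < γ} ∨ B = {x | vv v (x - a) ≤ γ})

/-- Spherical completeness: every nonempty chain of balls in `K` has nonempty
intersection. -/
def SphericallyComplete (v : Valuation K Γ) : Prop :=
  ∀ C : Set (Set K), C.Nonempty → (∀ B ∈ C, IsBall1 v B) → IsChain (· ⊆ ·) C →
    (⋂ B ∈ C, B).Nonempty

/-- The residue field `K̄` of the valuation ring `𝒪 = {x | v x ≤ 1}`. -/
def Kbar (v : Valuation K Γ) : Type _ :=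
  IsLocalRing.ResidueField v.valuationSubring

instance (v : Valuation K Γ) : Field (Kbar v) :=
  inferInstanceAs (Field (IsLocalRing.ResidueField v.valuationSubring))

/-- The residue map `res : 𝒪 → K̄`, extended by the junk value `0` outside `𝒪`. -/
def res' (v : Valuation K Γ) (x : K) : Kbar v :=
  if h : v x ≤ 1 then IsLocalRing.residue v.valuationSubring ⟨x, h⟩ else 0

/-- The coordinatewise residue map on `Kⁿ`. -/
def resv (v : Valuation K Γ) {n : ℕ} (x : Fin n → K) : Fin n → Kbar v :=
  fun i => res' v (x i)

/-- `res(S)` for a set `S ⊆ Kⁿ`: the set of residues of points of `S ∩ 𝒪ⁿ`. -/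
def resSet (v : Valuation K Γ) {n : ℕ} (S : Set (Fin n → K)) : Set (Fin n → Kbar v) :=
  resv v '' {x ∈ S | ∀ i, v (x i) ≤ 1}

/-- `dir(x) = res(K·x) ⊆ K̄ⁿ`. -/
def dirSet (v : Valuation K Γ) {n : ℕ} (x : Fin n → K) : Set (Fin n → Kbar v) :=
  resSet v {y | ∃ c : K, y = c • x}

/-- The coordinate projection `Kⁿ → K^d` selecting the coordinates `σ 0 < σ 1 < ⋯`. -/
def proj {A : Type*} {n d : ℕ} (σ : Fin d → Fin n) (x : Fin n → A) : Fin d → A :=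
  fun k => x (σ k)

/-- `σ` (a strictly increasing selection of `d` of the `n` coordinates) is an
exhibition of the `K̄`-subspace `Ū ⊆ K̄ⁿ` if the corresponding coordinate projection
`K̄ⁿ → K̄^d` restricts to an isomorphism from `Ū` onto `K̄^d`. -/
def IsExhibition (v : Valuation K Γ) {n d : ℕ} (σ : Fin d → Fin n)
    (Ubar : Submodule (Kbar v) (Fin n → Kbar v)) : Prop :=
  StrictMono σ ∧ Set.BijOn (proj σ) (Ubar : Set (Fin n → Kbar v)) Set.univ

/-- `affdir(C)`: the `K̄`-subspace of `K̄ⁿ` generated by all `dir(x − x')`, `x, x' ∈ C`. -/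
def affdir (v : Valuation K Γ) {n : ℕ} (C : Set (Fin n → K)) :
    Submodule (Kbar v) (Fin n → Kbar v) :=
  Submodule.span (Kbar v) (⋃ x ∈ C, ⋃ x' ∈ C, dirSet v (x - x'))

/-- A matrix has entries in the valuation ring `𝒪`. -/
def EntriesInO (v : Valuation K Γ) {n : ℕ} (M : Matrix (Fin n) (Fin n) K) : Prop :=
  ∀ i j, v (M i j) ≤ 1

/-- `M ∈ GLₙ(𝒪)`: `M` is invertible, with entries in `𝒪`, and its inverse also has
entries in `𝒪`. -/
def MemGLO (v : Valuation K Γ) {n : ℕ} (M : Matrix (Fin n) (Fin n) K) : Prop :=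
  EntriesInO v M ∧ ∃ N : Matrix (Fin n) (Fin n) K,
    M * N = 1 ∧ N * M = 1 ∧ EntriesInO v N

/-- The entrywise residue matrix of `M`. -/
def resM (v : Valuation K Γ) {n : ℕ} (M : Matrix (Fin n) (Fin n) K) :
    Matrix (Fin n) (Fin n) (Kbar v) :=
  fun i j => res' v (M i j)

/-- `DeltaLE v U W γ` expresses `Δ(U, W) ≤ γ`: for every `u ∈ U` there is `w ∈ W`
with `v(u − w) ≤ v(u)·γ`. -/
def DeltaLE (v : Valuation K Γ) {n : ℕ} (U W : Submodule K (Fin n → K)) (γ : Γ) : Prop :=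
  ∀ u ∈ U, ∃ w ∈ W, vv v (u - w) ≤ vv v u * γ

/-- `IsDelta v U W γ` expresses `Δ(U, W) = γ`: `γ` is the minimum of all admissible
bounds. -/
def IsDelta (v : Valuation K Γ) {n : ℕ} (U W : Submodule K (Fin n → K)) (γ : Γ) : Prop :=
  DeltaLE v U W γ ∧ ∀ δ : Γ, DeltaLE v U W δ → γ ≤ δ

end Preamble

variable {K : Type*} [Field K] {Γ : Type*} [LinearOrderedCommGroupWithZero Γ]

lemma le_vv (v : Valuation K Γ) {n : ℕ} (x : Fin n → K) (i : Fin n) :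
    v (x i) ≤ vv v x := by
  unfold vv; exact Finset.le_sup (f := fun i => v (x i)) (Finset.mem_univ i)

lemma vv_le (v : Valuation K Γ) {n : ℕ} {x : Fin n → K} {γ : Γ}
    (h : ∀ i, v (x i) ≤ γ) : vv v x ≤ γ := by
  unfold vv; exact Finset.sup_le fun i _ => h i

/-- for any subspace `U ⊆ Kⁿ` and any coset `x + U`, the set of
valuations of its elements has a minimum. -/
theorem coset_valuation_has_minimum
    (v : Valuation K Γ) {n : ℕ} (U : Submodule K (Fin n → K))
    (x : Fin n → K) :
    ∃ w₀ : Fin n → K, w₀ - x ∈ U ∧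
      ∀ w : Fin n → K, w - x ∈ U → vv v w₀ ≤ vv v w := by
  induction n with
  | zero =>
    refine ⟨x, by simpa using U.zero_mem, fun w hw => ?_⟩
    have hx0 : vv v x = (0 : Γ) := by
      unfold vv
      rw [Finset.univ_eq_empty, Finset.sup_empty]
      exact le_antisymm bot_le zero_le'
    rw [hx0]
    exact zero_le'
  | succ n ih =>
    by_cases hU : ∀ u ∈ U, u = (0 : Fin (n+1) → K)
    · refine ⟨x, by simp, fun w hw => ?_⟩
      have hwx : w = x := by
        have := hU _ hw
        rwa [sub_eq_zero] at this
      rw [hwx]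
    · push_neg at hU
      obtain ⟨u, huU, hu⟩ := hU
      obtain ⟨j, -, hj⟩ := Finset.exists_mem_eq_sup Finset.univ
        (Finset.univ_nonempty) (fun i => v (u i))
      have hle : ∀ i, v (u i) ≤ v (u j) := fun i => by
        rw [← hj]; exact Finset.le_sup (f := fun i => v (u i)) (Finset.mem_univ i)
      have huj : u j ≠ 0 := by
        intro h
        apply hu
        funext i
        have := hle i
        rw [h, map_zero, le_zero_iff, map_eq_zero] at this
        exact this
      set u' : Fin (n+1) → K := (u j)⁻¹ • u with hu'def
      have hu'U : u' ∈ U := U.smul_mem _ huU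
      have hu'j : u' j = 1 := by
        simp [hu'def, inv_mul_cancel₀ huj]
      have hu'le : ∀ i, v (u' i) ≤ 1 := by
        intro i
        have : v (u' i) = (v (u j))⁻¹ * v (u i) := by
          simp [hu'def, map_mul]
        calc v (u' i) = (v (u j))⁻¹ * v (u i) := this
          _ ≤ (v (u j))⁻¹ * v (u j) := mul_le_mul_right (hle i) _
          _ = 1 := inv_mul_cancel₀ ((Valuation.ne_zero_iff v).mpr huj)
      set pL : (Fin (n+1) → K) →ₗ[K] (Fin n → K) := LinearMap.funLeft K K j.succAbove with hpL
      have hpLapp : ∀ (z : Fin (n+1) → K) (k : Fin n), pL z k = z (j.succAbove k) :=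
        fun z k => rfl
      set U' : Submodule K (Fin n → K) :=
        Submodule.map pL (U ⊓ LinearMap.ker (LinearMap.proj j)) with hU'
      set x' : Fin n → K := pL (x - x j • u') with hx'
      obtain ⟨y₀, hy₀mem, hy₀min⟩ := ih U' x'
      obtain ⟨z, hz, hzy⟩ := hy₀mem
      obtain ⟨hzU, hzj⟩ := hz
      have hzj' : z j = 0 := hzj
      refine ⟨j.insertNth 0 y₀, ?_, ?_⟩
      · have key : j.insertNth 0 y₀ = z + (x - x j • u') := by
          funext i
          rcases eq_or_ne i j with rfl | hij
          · simp [Fin.insertNth_apply_same, hzj', hu'j]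
          · obtain ⟨k, rfl⟩ := Fin.exists_succAbove_eq hij
            have : z (j.succAbove k) = y₀ k - x' k := by
              have := congrFun hzy k
              rw [hpLapp] at this
              simpa using this
            simp only [Fin.insertNth_apply_succAbove, Pi.add_apply, this, hx', hpLapp]
            ring
        rw [key]
        have : z + (x - x j • u') - x = z - x j • u' := by ring
        rw [this]
        exact U.sub_mem hzU (U.smul_mem _ hu'U)
      · intro w hw
        set w' : Fin (n+1) → K := w - w j • u' with hw'def
        have hw'U : w' - x ∈ U := by
          have : w' - x = (w - x) - w j • u' := by rw [hw'def]; ring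
          rw [this]
          exact U.sub_mem hw (U.smul_mem _ hu'U)
        have hw'j : w' j = 0 := by
          simp [hw'def, hu'j]
        have hw'le : vv v w' ≤ vv v w := by
          refine vv_le v fun i => ?_
          have h1 : v (w' i) ≤ max (v (w i)) (v (w j • u' i)) := by
            rw [hw'def]
            exact v.map_sub _ _
          have h2 : v (w j • u' i) ≤ vv v w := by
            have : v (w j • u' i) = v (w j) * v (u' i) := map_mul v _ _
            rw [this]
            calc v (w j) * v (u' i) ≤ v (w j) * 1 :=
                  mul_le_mul_right (hu'le i) _
              _ = v (w j) := mul_one _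
              _ ≤ vv v w := le_vv v w j
          exact le_trans h1 (max_le (le_vv v w i) h2)
        have hmem' : pL w' - x' ∈ U' := by
          refine ⟨w' - (x - x j • u'), ⟨?_, ?_⟩, ?_⟩
          · have : w' - (x - x j • u') = (w' - x) + x j • u' := by ring
            rw [this]
            exact U.add_mem hw'U (U.smul_mem _ hu'U)
          · show w' j - (x j - x j * u' j) = 0
            rw [hw'j, hu'j]; ring
          · rw [map_sub, hx']
        have h1 : vv v (j.insertNth 0 y₀) ≤ vv v y₀ := by
          refine vv_le v fun i => ?_
          rcases eq_or_ne i j with rfl | hij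
          · simp [Fin.insertNth_apply_same]
          · obtain ⟨k, rfl⟩ := Fin.exists_succAbove_eq hij
            rw [Fin.insertNth_apply_succAbove]
            exact le_vv v y₀ k
        have h2 : vv v y₀ ≤ vv v (pL w') := hy₀min _ hmem'
        have h3 : vv v (pL w') ≤ vv v w' := by
          refine vv_le v fun k => ?_
          rw [hpLapp]
          exact le_vv v w' _
        exact le_trans h1 (le_trans h2 (le_trans h3 hw'le))

end
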